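/- Let X be a Banach space and let (yᵢ), (y'ᵢ) be normalized basic sequences with constant 2, with ∑ᵢ ‖yᵢ - zᵢ‖ < ∞ for some normalized block basic sequence (zᵢ). For T : [y'] → X bounded, the two operators T∘p₁ and T∘p₂ obtained from two similar choices (y'¹ᵢ), (y'²ᵢ) of block sequences of (y'ᵢ) (i.e. ∑‖y'¹ᵢ - y'²ᵢ‖ < ∞) satisfy lim_{k→∞} ‖(T∘p₁ - T∘p₂)|_{[z^k]}‖ = 0, where pⱼ : [z] → [y'ʲ] maps zᵢ to y'ʲᵢ. -/

import Mathlib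

open Filter Topology

noncomputable section

variable {E F : Type*}

def IsInfDimClosed [NormedAddCommGroup E] [NormedSpace ℂ E] (M : Submodule ℂ E) : Prop :=
  IsClosed (M : Set E) ∧ ¬ FiniteDimensional ℂ M

def HI (E : Type*) [NormedAddCommGroup E] [NormedSpace ℂ E] : Prop :=
  ∀ M N : Submodule ℂ E, IsInfDimClosed M → IsInfDimClosed N → ∀ ε > 0,
    ∃ u ∈ M, ∃ v ∈ N, ‖u‖ = 1 ∧ ‖v‖ = 1 ∧ ‖u - v‖ ≤ ε

def StrictlySingular [NormedAddCommGroup E] [NormedSpace ℂ E]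
    [NormedAddCommGroup F] [NormedSpace ℂ F] (S : E →L[ℂ] F) : Prop :=
  ∀ M : Submodule ℂ E, IsInfDimClosed M → ∀ c > 0, ∃ x ∈ M, ‖S x‖ < c * ‖x‖

def IsNBasic2 [NormedAddCommGroup E] [NormedSpace ℂ E] (y : ℕ → E) : Prop :=
  (∀ i, ‖y i‖ = 1) ∧ ∀ (a : ℕ → ℂ) (m n : ℕ), m ≤ n →
    ‖∑ i ∈ Finset.range m, a i • y i‖ ≤ 2 * ‖∑ i ∈ Finset.range n, a i • y i‖

def IsBlockOf [NormedAddCommGroup E] [NormedSpace ℂ E] (w z : ℕ → E) : Prop :=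
  ∃ (a : ℕ → ℂ) (F : ℕ → Finset ℕ), (∀ k, (F k).Nonempty) ∧
    (∀ k i j, i ∈ F k → j ∈ F (k+1) → i < j) ∧
    (∀ k, w k = ∑ i ∈ F k, a i • z i) ∧ (∀ k, w k ≠ 0)

def IsNBlockOf [NormedAddCommGroup E] [NormedSpace ℂ E] (w z : ℕ → E) : Prop :=
  IsBlockOf w z ∧ ∀ k, ‖w k‖ = 1

def cSpan [NormedAddCommGroup E] [NormedSpace ℂ E] (y : ℕ → E) : Submodule ℂ E :=
  (Submodule.span ℂ (Set.range y)).topologicalClosure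

def tailSpan [NormedAddCommGroup E] [NormedSpace ℂ E] (y : ℕ → E) (k : ℕ) : Submodule ℂ E :=
  cSpan (fun i => y (i + k))

theorem mem_cSpan [NormedAddCommGroup E] [NormedSpace ℂ E] (y : ℕ → E) (i : ℕ) :
    y i ∈ cSpan y :=
  (Submodule.span ℂ (Set.range y)).le_topologicalClosure (Submodule.subset_span ⟨i, rfl⟩)

theorem tailSpan_le [NormedAddCommGroup E] [NormedSpace ℂ E] (y : ℕ → E) (k : ℕ) :
    tailSpan y k ≤ cSpan y :=
  Submodule.topologicalClosure_mono (Submodule.span_mono (by rintro _ ⟨i, rfl⟩; exact ⟨i + k, rfl⟩))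

theorem coeff_bound_aux [NormedAddCommGroup E] [NormedSpace ℂ E] {z : ℕ → E}
    (hz : IsNBasic2 z) (a : ℕ → ℂ) {n j : ℕ} (hj : j < n) :
    ‖a j‖ ≤ 4 * ‖∑ i ∈ Finset.range n, a i • z i‖ := by
  have h1 := hz.2 a (j + 1) n hj
  have h2 := hz.2 a j n hj.le
  have key : a j • z j = (∑ i ∈ Finset.range (j + 1), a i • z i)
      - ∑ i ∈ Finset.range j, a i • z i := by
    rw [Finset.sum_range_succ]; abel
  calc ‖a j‖ = ‖a j • z j‖ := by rw [norm_smul, hz.1 j, mul_one]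
    _ ≤ ‖∑ i ∈ Finset.range (j + 1), a i • z i‖ + ‖∑ i ∈ Finset.range j, a i • z i‖ := by
        rw [key]; exact norm_sub_le _ _
    _ ≤ 2 * ‖∑ i ∈ Finset.range n, a i • z i‖ + 2 * ‖∑ i ∈ Finset.range n, a i • z i‖ :=
        add_le_add h1 h2
    _ = 4 * ‖∑ i ∈ Finset.range n, a i • z i‖ := by ring

def inclCLM [NormedAddCommGroup E] [NormedSpace ℂ E] {M N : Submodule ℂ E} (h : M ≤ N) :
    M →L[ℂ] N :=
  LinearMap.mkContinuous (Submodule.inclusion h) 1 (by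
    intro x
    simp [Submodule.inclusion])

theorem statement14 {X : Type*} [NormedAddCommGroup X] [NormedSpace ℂ X] [CompleteSpace X]
    (y' z y1 y2 : ℕ → X) (hy' : IsNBasic2 y') (hz : IsNBasic2 z)
    (hy1 : IsNBlockOf y1 y') (hy2 : IsNBlockOf y2 y')
    (hsim12 : Summable fun i => ‖y1 i - y2 i‖)
    (hsimz : Summable fun i => ‖z i - y1 i‖)
    (h1 : cSpan y1 ≤ cSpan y') (h2 : cSpan y2 ≤ cSpan y')
    (T : cSpan y' →L[ℂ] X)
    (p1 : cSpan z →L[ℂ] cSpan y1) (p2 : cSpan z →L[ℂ] cSpan y2)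
    (hp1 : ∀ i, (p1 ⟨z i, mem_cSpan z i⟩ : X) = y1 i)
    (hp2 : ∀ i, (p2 ⟨z i, mem_cSpan z i⟩ : X) = y2 i) :
    ∀ ε > 0, ∃ K : ℕ, ∀ k ≥ K, ∀ u : cSpan z, (u : X) ∈ tailSpan z k →
      ‖T ⟨(p1 u : X), h1 (p1 u).2⟩ - T ⟨(p2 u : X), h2 (p2 u).2⟩‖ ≤ ε * ‖u‖ := by
  intro ε hε
  set D : cSpan z →L[ℂ] X :=
    (T.comp ((inclCLM h1).comp p1)) - (T.comp ((inclCLM h2).comp p2)) with hD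
  have hDu : ∀ u : cSpan z,
      T ⟨(p1 u : X), h1 (p1 u).2⟩ - T ⟨(p2 u : X), h2 (p2 u).2⟩ = D u := by
    intro u; rfl
  set d : ℕ → ℝ := fun i => ‖y1 i - y2 i‖ with hd
  have hdnn : ∀ i, 0 ≤ d i := fun i => norm_nonneg _
  set t : ℕ → ℝ := fun k => ∑' i, d (i + k) with ht
  have htsum : ∀ k, Summable fun i => d (i + k) := fun k => (summable_nat_add_iff k).2 hsim12
  have htnn : ∀ k, 0 ≤ t k := fun k => tsum_nonneg fun i => hdnn _
  -- bound on D applied to basis vectors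
  have hDz : ∀ i, ‖D ⟨z i, mem_cSpan z i⟩‖ ≤ ‖T‖ * d i := by
    intro i
    have e1 : D ⟨z i, mem_cSpan z i⟩ =
        T (⟨(p1 ⟨z i, mem_cSpan z i⟩ : X), h1 (p1 ⟨z i, mem_cSpan z i⟩).2⟩ -
          ⟨(p2 ⟨z i, mem_cSpan z i⟩ : X), h2 (p2 ⟨z i, mem_cSpan z i⟩).2⟩) := by
      rw [map_sub]; rfl
    rw [e1]
    refine (T.le_opNorm _).trans ?_
    have : ‖(⟨(p1 ⟨z i, mem_cSpan z i⟩ : X), h1 (p1 ⟨z i, mem_cSpan z i⟩).2⟩ -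
          ⟨(p2 ⟨z i, mem_cSpan z i⟩ : X), h2 (p2 ⟨z i, mem_cSpan z i⟩).2⟩ : cSpan y')‖
        = d i := by
      rw [hd]
      simp only [AddSubgroupClass.coe_norm, AddSubgroupClass.coe_sub]
      exact congrArg norm (congrArg₂ (· - ·) (hp1 i) (hp2 i))
    rw [this]
  -- main estimate on the span
  have main : ∀ k (v : X), v ∈ Submodule.span ℂ (Set.range fun i => z (i + k)) →
      ∀ hv' : v ∈ cSpan z, ‖D ⟨v, hv'⟩‖ ≤ 4 * ‖T‖ * t k * ‖v‖ := by
    intro k v hv hv'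
    obtain ⟨c, hc⟩ := Finsupp.mem_span_range_iff_exists_finsupp.1 hv
    set N : ℕ := (c.support.sup id) + 1 with hN
    have hsupp : c.support ⊆ Finset.range N := by
      intro i hi
      exact Finset.mem_range.2 (Nat.lt_succ_of_le (Finset.le_sup (f := id) hi))
    set a : ℕ → ℂ := fun j => if k ≤ j then c (j - k) else 0 with ha
    set n : ℕ := k + N with hn
    have hrep : ∑ j ∈ Finset.range n, a j • z j = v := by
      rw [Finset.range_eq_Ico,
        ← Finset.sum_Ico_consecutive _ (Nat.zero_le k) (Nat.le_add_right k N)]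
      have h0 : ∑ j ∈ Finset.Ico 0 k, a j • z j = 0 := by
        refine Finset.sum_eq_zero fun j hj => ?_
        have : ¬ k ≤ j := Nat.not_le.2 (Finset.mem_Ico.1 hj).2
        simp [ha, this]
      rw [h0, zero_add, Finset.sum_Ico_eq_sum_range]
      have hn' : n - k = N := by omega
      rw [hn']
      rw [← hc, Finsupp.sum_of_support_subset c hsupp (fun i r => r • z (i + k))
        (by intro i _; simp)]
      refine Finset.sum_congr rfl fun i _ => ?_
      have : a (k + i) = c i := by simp [ha, Nat.add_sub_cancel_left]
      rw [this, Nat.add_comm k i]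
    -- coefficient bound
    have hcoeff : ∀ j < n, ‖a j‖ ≤ 4 * ‖v‖ := by
      intro j hj
      have := coeff_bound_aux hz a hj
      rwa [hrep] at this
    -- express D v as a sum
    have hvsum : (⟨v, hv'⟩ : cSpan z) = ∑ j ∈ Finset.range n,
        a j • (⟨z j, mem_cSpan z j⟩ : cSpan z) := by
      apply Subtype.ext
      push_cast
      rw [← hrep]
    have hDv : D ⟨v, hv'⟩ = ∑ j ∈ Finset.range n, a j • D ⟨z j, mem_cSpan z j⟩ := by
      rw [hvsum, map_sum]
      refine Finset.sum_congr rfl fun x _ => ?_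
      rw [← map_smul]
    rw [hDv]
    calc ‖∑ j ∈ Finset.range n, a j • D ⟨z j, mem_cSpan z j⟩‖
        ≤ ∑ j ∈ Finset.range n, ‖a j • D ⟨z j, mem_cSpan z j⟩‖ := norm_sum_le _ _
      _ ≤ ∑ j ∈ Finset.range n, (if k ≤ j then (4 * ‖v‖) * (‖T‖ * d j) else 0) := by
          refine Finset.sum_le_sum fun j hj => ?_
          rw [norm_smul]
          by_cases hkj : k ≤ j
          · simp only [hkj, if_true]
            exact mul_le_mul (hcoeff j (Finset.mem_range.1 hj)) (hDz j) (norm_nonneg _)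
              (by positivity)
          · simp [ha, hkj]
      _ = ∑ j ∈ Finset.Ico k n, (4 * ‖v‖) * (‖T‖ * d j) := by
          rw [Finset.range_eq_Ico,
            ← Finset.sum_Ico_consecutive _ (Nat.zero_le k) (Nat.le_add_right k N)]
          have h0 : ∑ j ∈ Finset.Ico 0 k, (if k ≤ j then (4 * ‖v‖) * (‖T‖ * d j) else 0) = 0 := by
            refine Finset.sum_eq_zero fun j hj => ?_
            simp [Nat.not_le.2 (Finset.mem_Ico.1 hj).2]
          rw [h0, zero_add]
          refine Finset.sum_congr rfl fun j hj => ?_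
          simp [(Finset.mem_Ico.1 hj).1]
      _ = (4 * ‖v‖ * ‖T‖) * ∑ j ∈ Finset.Ico k n, d j := by
          rw [Finset.mul_sum]; exact Finset.sum_congr rfl fun j _ => by ring
      _ ≤ (4 * ‖v‖ * ‖T‖) * t k := by
          refine mul_le_mul_of_nonneg_left ?_ (by positivity)
          rw [Finset.sum_Ico_eq_sum_range, ht]
          have : ∀ i, d (k + i) = d (i + k) := fun i => by rw [Nat.add_comm]
          simp_rw [this]
          exact Summable.sum_le_tsum _ (fun i _ => hdnn _) (htsum k)
      _ = 4 * ‖T‖ * t k * ‖v‖ := by ring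
  -- extend by continuity / closedness
  have extend : ∀ k (u : cSpan z), (u : X) ∈ tailSpan z k →
      ‖D u‖ ≤ 4 * ‖T‖ * t k * ‖u‖ := by
    intro k u hu
    set C : ℝ := 4 * ‖T‖ * t k with hC
    set B : Set (cSpan z) := {w : cSpan z | ‖D w‖ ≤ C * ‖w‖} with hB
    have hBclosed : IsClosed B :=
      isClosed_le (continuous_norm.comp D.continuous) (continuous_const.mul continuous_norm)
    have hcsclosed : IsClosed ((cSpan z : Set X)) := Submodule.isClosed_topologicalClosure _
    have hSclosed : IsClosed ((↑) '' B : Set X) :=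
      hcsclosed.isClosedEmbedding_subtypeVal.isClosedMap B hBclosed
    have hspan : (Submodule.span ℂ (Set.range fun i => z (i + k)) : Set X) ⊆ (↑) '' B := by
      intro v hv
      have hv' : v ∈ cSpan z :=
        tailSpan_le z k ((Submodule.span ℂ _).le_topologicalClosure hv)
      exact ⟨⟨v, hv'⟩, main k v hv hv', rfl⟩
    have hclos : (tailSpan z k : Set X) ⊆ (↑) '' B := by
      have : (tailSpan z k : Set X) =
          closure (Submodule.span ℂ (Set.range fun i => z (i + k)) : Set X) := rfl
      rw [this]
      exact closure_minimal hspan hSclosed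
    obtain ⟨w, hwB, hw⟩ := hclos hu
    have : w = u := Subtype.ext hw
    rw [← this]
    exact hwB
  -- choose K
  have hten : Tendsto t atTop (𝓝 0) := tendsto_sum_nat_add d
  have hδ : (0 : ℝ) < ε / (4 * (‖T‖ + 1)) := by positivity
  obtain ⟨K, hK⟩ := (Metric.tendsto_atTop.1 hten) (ε / (4 * (‖T‖ + 1))) hδ
  refine ⟨K, fun k hk u hu => ?_⟩
  have htk : t k < ε / (4 * (‖T‖ + 1)) := by
    have := hK k hk
    rwa [Real.dist_eq, sub_zero, abs_of_nonneg (htnn k)] at this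
  have hCε : 4 * ‖T‖ * t k ≤ ε := by
    have h1 : 4 * ‖T‖ * t k ≤ 4 * (‖T‖ + 1) * t k := by
      refine mul_le_mul_of_nonneg_right (by linarith [norm_nonneg T]) (htnn k)
    have h2 : 4 * (‖T‖ + 1) * t k ≤ 4 * (‖T‖ + 1) * (ε / (4 * (‖T‖ + 1))) := by
      refine mul_le_mul_of_nonneg_left (le_of_lt htk) (by positivity)
    have h3 : 4 * (‖T‖ + 1) * (ε / (4 * (‖T‖ + 1))) = ε := by
      field_simp
    linarith
  rw [hDu u]
  calc ‖D u‖ ≤ 4 * ‖T‖ * t k * ‖u‖ := extend k u hu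
    _ ≤ ε * ‖u‖ := mul_le_mul_of_nonneg_right hCε (norm_nonneg _)
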